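/- Let C ⊆ ℝ⁺ be a J-set near zero. Then for every finite set F of real sequences converging to 0 (whose terms may be negative) and every δ > 0, there exist a ∈ (0,δ) and a finite nonempty H ⊆ ℕ such that for each f ∈ F, a + Σ_{t∈H} f(t) ∈ C. -/
import Mathlib


open Filter Set

attribute [local instance] Ultrafilter.add Ultrafilter.addSemigroup

/-- The finite sums `FS((b(n))ₙ) = {∑_{n∈H} b(n) : H ⊆ ℕ finite nonempty}`. -/
def FS {α : Type*} [AddCommMonoid α] (b : ℕ → α) : Set α :=
  {y | ∃ H : Finset ℕ, H.Nonempty ∧ y = ∑ t ∈ H, b t}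

/-- `C ⊆ ℝ⁺` is a J-set near zero: for every finite set of positive sequences converging to `0`
and every `δ > 0`, there exist `a ∈ (0,δ)` and a finite nonempty `H ⊆ ℕ` with
`a + ∑_{t∈H} f(t) ∈ C` for every `f` in the family. -/
def JSetNearZero (C : Set ℝ) : Prop :=
  ∀ F : Finset (ℕ → ℝ),
    (∀ f ∈ F, (∀ n, 0 < f n) ∧ Tendsto f atTop (nhds 0)) →
    ∀ δ : ℝ, 0 < δ →
      ∃ a ∈ Set.Ioo (0:ℝ) δ, ∃ H : Finset ℕ, H.Nonempty ∧
        ∀ f ∈ F, a + ∑ t ∈ H, f t ∈ C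

/-- `E ⊆ (ℝ⁺)ᵛ` is a J-set near zero. -/
def JSetNearZeroV (v : ℕ) (E : Set (Fin v → ℝ)) : Prop :=
  ∀ F : Finset (ℕ → Fin v → ℝ),
    (∀ f ∈ F, (∀ n i, 0 < f n i) ∧ ∀ i, Tendsto (fun n => f n i) atTop (nhds 0)) →
    ∀ δ : ℝ, 0 < δ →
      ∃ a : Fin v → ℝ, (∀ i, a i ∈ Set.Ioo (0:ℝ) δ) ∧ ∃ H : Finset ℕ, H.Nonempty ∧
        ∀ f ∈ F, a + ∑ t ∈ H, f t ∈ E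

/-- `C ⊆ ℝ⁺` is a C-set near zero: `C` belongs to some idempotent ultrafilter `p ∈ 0⁺(ℝ⁺)` all
of whose members are J-sets near zero (i.e. `p ∈ J₀(ℝ⁺)`). -/
def CSetNearZero (C : Set ℝ) : Prop :=
  ∃ p : Ultrafilter ℝ, p + p = p ∧ (∀ ε : ℝ, 0 < ε → Set.Ioo 0 ε ∈ p) ∧ C ∈ p ∧
    ∀ A ∈ p, JSetNearZero A

/-- `E ⊆ (ℝ⁺)ᵛ` is a C-set near zero: there is an idempotent in `cl(E) ∩ J₀((ℝ⁺)ᵛ)`. -/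
def CSetNearZeroV (v : ℕ) (E : Set (Fin v → ℝ)) : Prop :=
  ∃ p : Ultrafilter (Fin v → ℝ), p + p = p ∧
    (∀ ε : ℝ, 0 < ε → {x : Fin v → ℝ | ∀ i, 0 < x i ∧ x i < ε} ∈ p) ∧ E ∈ p ∧
    ∀ A ∈ p, JSetNearZeroV v A

/-- `U ⊆ (ℝ⁺)ᵈ` is a weak IP-set near zero: it contains `FS` of a sequence in `(ℝ⁺)ᵈ`
converging to zero. -/
def WeakIPNearZero (d : ℕ) (U : Set (Fin d → ℝ)) : Prop :=
  ∃ b : ℕ → Fin d → ℝ, (∀ n i, 0 < b n i) ∧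
    (∀ i, Tendsto (fun n => b n i) atTop (nhds 0)) ∧ FS b ⊆ U

/-- `M` is image partition regular over `ℝ⁺`: for every finite coloring of `ℝ⁺` there is
`x ∈ (ℝ⁺)ᵛ` with all entries of `Mx` in `ℝ⁺` and monochromatic. -/
def IPR (u v : ℕ) (M : Matrix (Fin u) (Fin v) ℝ) : Prop :=
  ∀ r : ℕ, 0 < r → ∀ c : ℝ → Fin r,
    ∃ x : Fin v → ℝ, (∀ j, 0 < x j) ∧ (∀ i, 0 < M.mulVec x i) ∧
      ∃ k : Fin r, ∀ i, c (M.mulVec x i) = k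

/-- `M` is image partition regular over `ℝ⁺` near zero: for every finite coloring of `ℝ⁺` and
every `δ > 0` there is `x ∈ (ℝ⁺)ᵛ` with the entries of `Mx` monochromatic and in `(0,δ)`. -/
def IPRNearZero (u v : ℕ) (M : Matrix (Fin u) (Fin v) ℝ) : Prop :=
  ∀ r : ℕ, 0 < r → ∀ c : ℝ → Fin r, ∀ δ : ℝ, 0 < δ →
    ∃ x : Fin v → ℝ, (∀ j, 0 < x j) ∧ (∀ i, M.mulVec x i ∈ Set.Ioo 0 δ) ∧
      ∃ k : Fin r, ∀ i, c (M.mulVec x i) = k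

/-- `B` is a first entries matrix: no row is zero, the first nonzero entry of each row is
positive, and first nonzero entries occurring in the same column are equal. -/
def FirstEntriesMatrix {u m : ℕ} (B : Matrix (Fin u) (Fin m) ℝ) : Prop :=
  (∀ i, ∃ j, B i j ≠ 0) ∧
  (∀ i j, (∀ k, k < j → B i k = 0) → B i j ≠ 0 → 0 < B i j) ∧
  (∀ i i' j, (∀ k, k < j → B i k = 0) → (∀ k, k < j → B i' k = 0) →
    B i j ≠ 0 → B i' j ≠ 0 → B i j = B i' j)

lemma sum_inv_two_pow_lt_half (K : Finset ℕ) : ∑ k ∈ K, ((2:ℝ))⁻¹ ^ (k + 2) < 1 / 2 := by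
  obtain ⟨N, hNK⟩ := K.exists_nat_subset_range
  have hle : ∑ k ∈ K, ((2:ℝ))⁻¹ ^ (k + 2) ≤ ∑ k ∈ Finset.range N, ((2:ℝ))⁻¹ ^ (k + 2) :=
    Finset.sum_le_sum_of_subset_of_nonneg hNK (fun i _ _ => by positivity)
  have heq : ∑ k ∈ Finset.range N, ((2:ℝ))⁻¹ ^ (k + 2)
      = (∑ k ∈ Finset.range N, ((2:ℝ))⁻¹ ^ k) * (2:ℝ)⁻¹ ^ 2 := by
    rw [Finset.sum_mul]; exact Finset.sum_congr rfl fun k _ => (pow_add _ _ _)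
  have hgeom : ∑ k ∈ Finset.range N, ((2:ℝ))⁻¹ ^ k
      = ((2:ℝ)⁻¹ ^ N - 1) / ((2:ℝ)⁻¹ - 1) := geom_sum_eq (by norm_num) N
  have hpow : (0:ℝ) < (2:ℝ)⁻¹ ^ N := by positivity
  calc ∑ k ∈ K, ((2:ℝ))⁻¹ ^ (k + 2) ≤ _ := hle
    _ = ((2:ℝ)⁻¹ ^ N - 1) / ((2:ℝ)⁻¹ - 1) * (2:ℝ)⁻¹ ^ 2 := by rw [heq, hgeom]
    _ < 1 / 2 := by rw [div_mul_eq_mul_div]; rw [div_lt_iff_of_neg (by norm_num)]; nlinarith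

/-- Lemma 3.2: if `C ⊆ ℝ⁺` is a J-set near zero then the J-set condition holds
even for finite families of real sequences (possibly with negative terms) converging to `0`. -/
theorem jSetNearZero_real_sequences (C : Set ℝ) (hC : C ⊆ Set.Ioi 0)
    (hJ : JSetNearZero C) :
    ∀ F : Finset (ℕ → ℝ), (∀ f ∈ F, Tendsto f atTop (nhds 0)) →
      ∀ δ : ℝ, 0 < δ →
        ∃ a ∈ Set.Ioo (0:ℝ) δ, ∃ H : Finset ℕ, H.Nonempty ∧
          ∀ f ∈ F, a + ∑ t ∈ H, f t ∈ C := by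
  intro F hF δ hδ
  -- choose thresholds where all sequences are small
  have hev : ∀ k : ℕ, ∃ N : ℕ, ∀ m ≥ N, ∀ f ∈ F, |f m| < δ * (2:ℝ)⁻¹ ^ (k + 3) := by
    intro k
    have hpos : 0 < δ * (2:ℝ)⁻¹ ^ (k + 3) := by positivity
    have hev2 : ∀ᶠ m in atTop, ∀ f ∈ F, |f m| < δ * (2:ℝ)⁻¹ ^ (k + 3) := by
      rw [eventually_all_finset]
      intro f hf
      have := (hF f hf).eventually (eventually_abs_sub_lt 0 hpos)
      simpa using this
    exact eventually_atTop.mp hev2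
  choose N hN using hev
  set n : ℕ → ℕ := fun k => Nat.rec (N 0) (fun k ih => max (ih + 1) (N (k + 1))) k with hn
  have hn_mono : StrictMono n :=
    strictMono_nat_of_lt_succ fun k =>
      lt_of_lt_of_le (Nat.lt_succ_self _) (le_max_left _ _)
  have hnN : ∀ k, N k ≤ n k := by
    intro k
    cases k with
    | zero => exact le_refl _
    | succ k => exact le_max_right _ _
  have hsmall : ∀ k, ∀ f ∈ F, |f (n k)| < δ * (2:ℝ)⁻¹ ^ (k + 3) :=
    fun k f hf => hN k _ (hnN k) f hf
  set g : (ℕ → ℝ) → (ℕ → ℝ) := fun f k => f (n k) + δ * (2:ℝ)⁻¹ ^ (k + 2) with hg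
  have hpowlt : ∀ k : ℕ, δ * (2:ℝ)⁻¹ ^ (k + 3) < δ * (2:ℝ)⁻¹ ^ (k + 2) := by
    intro k
    apply mul_lt_mul_of_pos_left _ hδ
    exact pow_lt_pow_right_of_lt_one₀ (by norm_num) (by norm_num) (by omega)
  classical
  have hF' : ∀ g' ∈ F.image g, (∀ k, 0 < g' k) ∧ Tendsto g' atTop (nhds 0) := by
    intro g' hg'
    obtain ⟨f, hf, rfl⟩ := Finset.mem_image.mp hg'
    constructor
    · intro k
      have h1 := hsmall k f hf
      have h2 := hpowlt k
      have h3 : -(δ * (2:ℝ)⁻¹ ^ (k + 3)) < f (n k) := neg_lt_of_abs_lt h1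
      simp only [hg]
      linarith
    · have h1 : Tendsto (fun k => f (n k)) atTop (nhds 0) :=
        (hF f hf).comp (hn_mono.tendsto_atTop)
      have h2 : Tendsto (fun k : ℕ => δ * (2:ℝ)⁻¹ ^ (k + 2)) atTop (nhds 0) := by
        have hb : Tendsto (fun k : ℕ => ((2:ℝ)⁻¹) ^ k) atTop (nhds 0) :=
          tendsto_pow_atTop_nhds_zero_of_lt_one (by norm_num) (by norm_num)
        have := (hb.const_mul (δ * (2:ℝ)⁻¹ ^ 2))
        rw [mul_zero] at this
        refine this.congr fun k => ?_
        rw [pow_add]; ring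
      have := h1.add h2
      rw [add_zero] at this
      exact this
  obtain ⟨a', ha', K, hK, hmem⟩ := hJ (F.image g) hF' (δ / 2) (half_pos hδ)
  refine ⟨a' + ∑ k ∈ K, δ * (2:ℝ)⁻¹ ^ (k + 2), ?_, K.image n, hK.image n, ?_⟩
  · constructor
    · have : (0:ℝ) ≤ ∑ k ∈ K, δ * (2:ℝ)⁻¹ ^ (k + 2) :=
        Finset.sum_nonneg fun k _ => by positivity
      have := ha'.1
      linarith
    · have hs : ∑ k ∈ K, δ * (2:ℝ)⁻¹ ^ (k + 2) = δ * ∑ k ∈ K, (2:ℝ)⁻¹ ^ (k + 2) := by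
        rw [Finset.mul_sum]
      have hlt : δ * ∑ k ∈ K, (2:ℝ)⁻¹ ^ (k + 2) < δ * (1 / 2) :=
        mul_lt_mul_of_pos_left (sum_inv_two_pow_lt_half K) hδ
      have := ha'.2
      rw [hs]
      linarith
  · intro f hf
    have hsum : ∑ t ∈ K.image n, f t = ∑ k ∈ K, f (n k) :=
      Finset.sum_image fun x _ y _ hxy => hn_mono.injective hxy
    have hmem' := hmem (g f) (Finset.mem_image_of_mem g hf)
    have : a' + ∑ k ∈ K, g f k
        = a' + ∑ k ∈ K, δ * (2:ℝ)⁻¹ ^ (k + 2) + ∑ k ∈ K, f (n k) := by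
      simp only [hg]
      rw [Finset.sum_add_distrib]
      ring
    rw [this] at hmem'
    rw [hsum]
    exact hmem'
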